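/- For any Whitney map μ on the hyperspace C(X) of a continuum X and any t ∈ [0, μ(X)], the Whitney level μ⁻¹(t) is a continuum (nonempty, compact, and connected). -/

import Mathlib

open TopologicalSpace

/-- The hyperspace of nonempty subcontinua of `X`, with the Hausdorff metric
inherited from `NonemptyCompacts X`. -/
abbrev SubC (X : Type*) [MetricSpace X] :=
  {K : NonemptyCompacts X // IsConnected (K : Set X)}

/-- A Whitney map on `C(X)`: continuous, zero on singletons, and strictly
monotone with respect to proper inclusion. -/
def IsWhitneyMap {X : Type*} [MetricSpace X] (μ : SubC X → ℝ) : Prop :=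
  Continuous μ ∧ (∀ (x : X) (K : SubC X), (K.1 : Set X) = {x} → μ K = 0) ∧
    ∀ A B : SubC X, (A.1 : Set X) ⊂ (B.1 : Set X) → μ A < μ B

/-- The whole continuum `X` as an element of its hyperspace of subcontinua. -/
def wholeC (X : Type*) [MetricSpace X] [CompactSpace X] [ConnectedSpace X] [Nonempty X] :
    SubC X :=
  ⟨⟨⟨Set.univ, isCompact_univ⟩, Set.univ_nonempty⟩, isConnected_univ⟩

set_option linter.unusedSectionVars false
set_option maxHeartbeats 4000000

open Set Metric EMetric

namespace WhitneyAux

variable {X : Type*} [MetricSpace X] [CompactSpace X]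

lemma edist_eq (s t : NonemptyCompacts X) :
    edist s t = hausdorffEdist (s : Set X) (t : Set X) := rfl

lemma hausdorffEdist_union_le {s t u v : Set X} :
    hausdorffEdist (s ∪ t) (u ∪ v) ≤ max (hausdorffEdist s u) (hausdorffEdist t v) := by
  apply hausdorffEdist_le_of_infEdist
  · rintro x (hx | hx)
    · exact le_trans (le_trans (infEdist_anti subset_union_left)
        (infEdist_le_hausdorffEdist_of_mem hx)) (le_max_left _ _)
    · exact le_trans (le_trans (infEdist_anti subset_union_right)
        (infEdist_le_hausdorffEdist_of_mem hx)) (le_max_right _ _)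
  · rintro x (hx | hx)
    · refine le_trans (le_trans (infEdist_anti subset_union_left) ?_) (le_max_left _ _)
      rw [hausdorffEdist, hausdorffEDist_comm]
      exact infEdist_le_hausdorffEdist_of_mem hx
    · refine le_trans (le_trans (infEdist_anti subset_union_right) ?_) (le_max_right _ _)
      rw [hausdorffEdist, hausdorffEDist_comm]
      exact infEdist_le_hausdorffEdist_of_mem hx

lemma continuous_sup :
    Continuous (fun p : NonemptyCompacts X × NonemptyCompacts X => p.1 ⊔ p.2) := by
  have : LipschitzWith 1 (fun p : NonemptyCompacts X × NonemptyCompacts X => p.1 ⊔ p.2) := by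
    intro p q
    rw [ENNReal.coe_one, one_mul]
    calc edist (p.1 ⊔ p.2) (q.1 ⊔ q.2)
        = hausdorffEdist ((p.1 : Set X) ∪ (p.2 : Set X)) ((q.1 : Set X) ∪ (q.2 : Set X)) := by
          rw [edist_eq, NonemptyCompacts.coe_sup, NonemptyCompacts.coe_sup]
      _ ≤ max (hausdorffEdist (p.1 : Set X) (q.1 : Set X))
            (hausdorffEdist (p.2 : Set X) (q.2 : Set X)) := hausdorffEdist_union_le
      _ = edist p q := by rw [Prod.edist_eq, edist_eq, edist_eq]
  exact this.continuous

/-- joint continuity of `infDist` -/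

lemma continuous_infDist :
    Continuous (fun p : X × NonemptyCompacts X => infDist p.1 (p.2 : Set X)) := by
  exact lipschitz_infDist.continuous

lemma isClosed_mem :
    IsClosed {p : X × NonemptyCompacts X | p.1 ∈ (p.2 : Set X)} := by
  have : {p : X × NonemptyCompacts X | p.1 ∈ (p.2 : Set X)} =
      (fun p : X × NonemptyCompacts X => infDist p.1 (p.2 : Set X)) ⁻¹' {0} := by
    ext ⟨x, K⟩
    simp only [mem_setOf_eq, mem_preimage, mem_singleton_iff]
    exact ⟨fun h => infDist_zero_of_mem h,
      fun h => (K.isCompact.isClosed.mem_iff_infDist_zero K.nonempty).2 h⟩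
  rw [this]
  exact isClosed_singleton.preimage continuous_infDist

lemma isClosed_subset :
    IsClosed {p : NonemptyCompacts X × NonemptyCompacts X | (p.1 : Set X) ⊆ (p.2 : Set X)} := by
  have : {p : NonemptyCompacts X × NonemptyCompacts X | (p.1 : Set X) ⊆ (p.2 : Set X)} =
      {p : NonemptyCompacts X × NonemptyCompacts X | p.1 ⊔ p.2 = p.2} := by
    ext p
    simp only [mem_setOf_eq]
    constructor
    · intro h; apply NonemptyCompacts.ext; rw [NonemptyCompacts.coe_sup]; exact union_eq_self_of_subset_left h
    · intro h; rw [← h, NonemptyCompacts.coe_sup]; exact subset_union_left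
  rw [this]
  exact isClosed_eq continuous_sup continuous_snd

lemma isClosed_con :
    IsClosed {C : NonemptyCompacts X | IsPreconnected (C : Set X)} := by
  rw [← isOpen_compl_iff]
  rw [EMetric.isOpen_iff]
  intro C hC
  simp only [mem_compl_iff, mem_setOf_eq] at hC
  rw [isPreconnected_iff_subset_of_fully_disjoint_closed C.isCompact.isClosed] at hC
  push_neg at hC
  obtain ⟨s1, s2, hcl1, hcl2, hsub, hdisj, hn1, hn2⟩ := hC
  -- the two compact pieces
  have hK1 : IsCompact ((C : Set X) ∩ s1) := C.isCompact.inter_right hcl1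
  have hK2 : IsCompact ((C : Set X) ∩ s2) := C.isCompact.inter_right hcl2
  have hne1 : ((C : Set X) ∩ s1).Nonempty := by
    rcases not_subset.1 hn2 with ⟨a, ha, ha2⟩
    exact ⟨a, ha, (hsub ha).resolve_right ha2⟩
  have hne2 : ((C : Set X) ∩ s2).Nonempty := by
    rcases not_subset.1 hn1 with ⟨a, ha, ha1⟩
    exact ⟨a, ha, (hsub ha).resolve_left ha1⟩
  have hdisj' : Disjoint ((C : Set X) ∩ s1) ((C : Set X) ∩ s2) :=
    (hdisj.mono inter_subset_right inter_subset_right)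
  obtain ⟨U, V, hU, hV, hKU, hKV, hUV⟩ := SeparatedNhds.of_isCompact_isCompact hK1 hK2 hdisj'
  have hCUV : (C : Set X) ⊆ U ∪ V := by
    intro y hy
    rcases hsub hy with h | h
    · exact Or.inl (hKU ⟨hy, h⟩)
    · exact Or.inr (hKV ⟨hy, h⟩)
  obtain ⟨δ, hδ, hthick⟩ := C.isCompact.exists_thickening_subset_open (hU.union hV) hCUV
  obtain ⟨a, ha⟩ := hne1
  obtain ⟨b, hb⟩ := hne2
  obtain ⟨r1, hr1, hball1⟩ := EMetric.isOpen_iff.1 hU a (hKU ha)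
  obtain ⟨r2, hr2, hball2⟩ := EMetric.isOpen_iff.1 hV b (hKV hb)
  refine ⟨min (ENNReal.ofReal δ) (min r1 r2), by positivity, ?_⟩
  intro D hD
  simp only [mem_compl_iff, mem_setOf_eq]
  intro hDpre
  rw [EMetric.mem_ball, edist_eq] at hD
  have hDsub : (D : Set X) ⊆ U ∪ V := by
    intro y hy
    apply hthick
    rw [Metric.mem_thickening_iff_infEdist_lt]
    exact lt_of_le_of_lt (infEdist_le_hausdorffEdist_of_mem hy)
      (lt_of_lt_of_le hD (min_le_left _ _))
  have hCD : hausdorffEdist (C : Set X) (D : Set X) < min r1 r2 := by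
    rw [hausdorffEdist, hausdorffEDist_comm]
    exact lt_of_lt_of_le hD (min_le_right _ _)
  obtain ⟨d1, hd1D, hd1⟩ :=
    exists_edist_lt_of_hausdorffEdist_lt ha.1 (lt_of_lt_of_le hCD (min_le_left _ _))
  obtain ⟨d2, hd2D, hd2⟩ :=
    exists_edist_lt_of_hausdorffEdist_lt hb.1 (lt_of_lt_of_le hCD (min_le_right _ _))
  have hd1U : d1 ∈ U := hball1 (by rw [EMetric.mem_ball, edist_comm]; exact hd1)
  have hd2V : d2 ∈ V := hball2 (by rw [EMetric.mem_ball, edist_comm]; exact hd2)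
  obtain ⟨z, hz⟩ := hDpre U V hU hV hDsub ⟨d1, hd1D, hd1U⟩ ⟨d2, hd2D, hd2V⟩
  exact hUV.le_bot ⟨hz.2.1, hz.2.2⟩ |>.elim

lemma exists_strictly_between {A B : Set X} (hA : IsConnected A) (hAc : IsCompact A)
    (hB : IsConnected B) (hBc : IsCompact B) (hAB : A ⊂ B) :
    ∃ L : Set X, IsConnected L ∧ IsCompact L ∧ A ⊂ L ∧ L ⊂ B := by
  obtain ⟨x₀, hx₀⟩ := hA.nonempty
  have hcont : Continuous fun y : X => infDist y A := continuous_infDist_pt A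
  obtain ⟨ystar, hystarB, hmax⟩ :=
    hBc.exists_isMaxOn hB.nonempty hcont.continuousOn
  set r : ℝ := infDist ystar A with hr
  obtain ⟨b, hbB, hbA⟩ := exists_of_ssubset hAB
  have hrpos : 0 < r := by
    have hb0 : 0 < infDist b A :=
      (hAc.isClosed.notMem_iff_infDist_pos hA.nonempty).1 hbA
    exact lt_of_lt_of_le hb0 (hmax hbB)
  set ε : ℝ := r / 2 with hε
  have hεpos : 0 < ε := by positivity
  have hεr : ε < r := by simp [hε]; linarith
  set N : Set X := B ∩ {y | infDist y A ≤ ε} with hN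
  have hNclosed : IsClosed N :=
    hBc.isClosed.inter (isClosed_le hcont continuous_const)
  have hNcomp : IsCompact N := hBc.of_isClosed_subset hNclosed inter_subset_left
  have hAN : A ⊆ N := fun a ha =>
    ⟨hAB.subset ha, by simp [infDist_zero_of_mem ha, le_of_lt hεpos]⟩
  have hx₀N : x₀ ∈ N := hAN hx₀
  set L : Set X := connectedComponentIn N x₀ with hL
  have hAL : A ⊆ L := hA.isPreconnected.subset_connectedComponentIn hx₀ hAN
  have hLconn : IsConnected L := isConnected_connectedComponentIn_iff.2 hx₀N
  have hLN : L ⊆ N := connectedComponentIn_subset N x₀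
  haveI : CompactSpace ↥N := isCompact_iff_compactSpace.1 hNcomp
  have hLcomp : IsCompact L := by
    rw [hL, connectedComponentIn_eq_image hx₀N]
    exact (isClosed_connectedComponent.isCompact).image continuous_subtype_val
  have hystarN : ystar ∉ N := by
    intro h
    exact absurd h.2 (by simp only [mem_setOf_eq, not_le, ← hr]; exact hεr)
  -- key claim : L has a point at infDist ≥ ε from A
  have hkey : ∃ y₁ ∈ L, ε ≤ infDist y₁ A := by
    by_contra hcon
    push_neg at hcon
    set z₀ : ↥N := ⟨x₀, hx₀N⟩ with hz₀
    set F' : Set ↥N := {z : ↥N | ε ≤ infDist (z : X) A} with hF'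
    have hF'closed : IsClosed F' := isClosed_le continuous_const (hcont.comp continuous_subtype_val)
    have hinter : (F' ∩ ⋂ s : { s : Set ↥N // IsClopen s ∧ z₀ ∈ s }, ↑s) = ∅ := by
      rw [← connectedComponent_eq_iInter_isClopen z₀]
      ext z
      simp only [mem_inter_iff, mem_empty_iff_false, iff_false, not_and, hF', mem_setOf_eq]
      intro hz hzc
      have : (z : X) ∈ L := by
        rw [hL, connectedComponentIn_eq_image hx₀N]
        exact ⟨z, hzc, rfl⟩
      exact absurd hz (not_le.2 (hcon _ this))
    haveI : Nonempty { s : Set ↥N // IsClopen s ∧ z₀ ∈ s } := ⟨⟨univ, isClopen_univ, mem_univ _⟩⟩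
    obtain ⟨⟨W, hWclopen, hz₀W⟩, hWF⟩ :=
      (hF'closed.isCompact).elim_directed_family_closed
        (fun s : { s : Set ↥N // IsClopen s ∧ z₀ ∈ s } => (s : Set ↥N))
        (fun s => s.2.1.1) hinter
        (fun s t => ⟨⟨s.1 ∩ t.1, s.2.1.inter t.2.1, s.2.2, t.2.2⟩,
          inter_subset_left, inter_subset_right⟩)
    obtain ⟨O, hOopen, hOW⟩ := isOpen_induced_iff.1 hWclopen.2
    set Gset : Set X := {y | infDist y A < ε} with hG
    have hGopen : IsOpen Gset := isOpen_lt hcont continuous_const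
    have hWG : ∀ z ∈ W, (z : X) ∈ Gset := by
      intro z hzW
      by_contra hzG
      have : z ∈ F' ∩ W := ⟨show ε ≤ infDist (z : X) A from not_lt.1 hzG, hzW⟩
      rw [hWF] at this
      exact this
    have hWset : Subtype.val '' W = B ∩ (O ∩ Gset) := by
      ext y
      constructor
      · rintro ⟨z, hzW, rfl⟩
        refine ⟨z.2.1, ?_, hWG z hzW⟩
        · have : z ∈ Subtype.val ⁻¹' O := by rw [hOW]; exact hzW
          exact this
      · rintro ⟨hyB, hyO, hyG⟩
        have hyN : y ∈ N := ⟨hyB, show infDist y A ≤ ε from le_of_lt hyG⟩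
        refine ⟨⟨y, hyN⟩, ?_, rfl⟩
        rw [← hOW]; exact hyO
    have hWsetclosed : IsClosed (Subtype.val '' W) :=
      ((hWclopen.1.isCompact).image continuous_subtype_val).isClosed
    have := isPreconnected_iff_subset_of_fully_disjoint_closed hBc.isClosed |>.1
      hB.isPreconnected (Subtype.val '' W) (B \ (O ∩ Gset))
      hWsetclosed
      (hBc.isClosed.inter (hOopen.inter hGopen).isClosed_compl)
      (by
        intro y hy
        by_cases hcase : y ∈ O ∩ Gset
        · exact Or.inl (by rw [hWset]; exact ⟨hy, hcase⟩)
        · exact Or.inr ⟨hy, hcase⟩)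
      (by
        rw [hWset]
        exact Set.disjoint_left.2 fun y hy hy2 => hy2.2 hy.2)
    rcases this with hBW | hBW
    · have : ystar ∈ Gset := by
        have := hBW hystarB
        rw [hWset] at this
        exact this.2.2
      rw [hG, mem_setOf_eq, ← hr] at this
      exact absurd this (not_lt.2 (le_of_lt hεr))
    · have hx₀W : x₀ ∈ Subtype.val '' W := ⟨z₀, hz₀W, rfl⟩
      rw [hWset] at hx₀W
      exact (hBW (hAB.subset hx₀)).2 hx₀W.2
  obtain ⟨y₁, hy₁L, hy₁⟩ := hkey
  refine ⟨L, hLconn, hLcomp, ⟨hAL, ?_⟩, ⟨hLN.trans inter_subset_left, ?_⟩⟩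
  · intro hsub
    have := infDist_zero_of_mem (hsub hy₁L)
    rw [this] at hy₁
    exact absurd hy₁ (not_le.2 hεpos)
  · intro hsub
    exact hystarN (hLN (hsub hystarB))

lemma le_iff_subset {K L : NonemptyCompacts X} : K ≤ L ↔ (K : Set X) ⊆ (L : Set X) := Iff.rfl

lemma ssubset_iff' {K L : NonemptyCompacts X} : (K : Set X) ⊂ (L : Set X) ↔ K ≤ L ∧ K ≠ L := by
  rw [ssubset_iff_subset_ne]
  exact and_congr Iff.rfl
    ⟨fun h e => h (congrArg _ e), fun h e => h (NonemptyCompacts.ext e)⟩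

lemma isClosed_supset (A : NonemptyCompacts X) :
    IsClosed {K : NonemptyCompacts X | (A : Set X) ⊆ (K : Set X)} :=
  isClosed_subset.preimage (continuous_const.prodMk continuous_id)

lemma isClosed_subsetK (B : NonemptyCompacts X) :
    IsClosed {K : NonemptyCompacts X | (K : Set X) ⊆ (B : Set X)} :=
  isClosed_subset.preimage (continuous_id.prodMk continuous_const)

lemma isClosed_comparable (K : NonemptyCompacts X) :
    IsClosed {D : NonemptyCompacts X | D ≤ K ∨ K ≤ D} :=
  (isClosed_subsetK K).union (isClosed_supset K)

lemma exists_good_chain (A B : NonemptyCompacts X) (hA : IsConnected (A : Set X))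
    (hB : IsConnected (B : Set X)) (hAB : (A : Set X) ⊆ (B : Set X)) :
    ∃ 𝒞 : Set (NonemptyCompacts X), A ∈ 𝒞 ∧ B ∈ 𝒞 ∧
      (∀ K ∈ 𝒞, IsConnected (K : Set X) ∧ (A : Set X) ⊆ (K : Set X) ∧ (K : Set X) ⊆ (B : Set X)) ∧
      IsChain (· ≤ ·) 𝒞 ∧ IsClosed 𝒞 ∧
      (∀ K ∈ 𝒞, ∀ L ∈ 𝒞, (K : Set X) ⊂ (L : Set X) →
        ∃ M ∈ 𝒞, (K : Set X) ⊂ (M : Set X) ∧ (M : Set X) ⊂ (L : Set X)) := by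
  classical
  set Ω := {C : NonemptyCompacts X //
    IsConnected (C : Set X) ∧ (A : Set X) ⊆ (C : Set X) ∧ (C : Set X) ⊆ (B : Set X)} with hΩ
  set a : Ω := ⟨A, hA, subset_rfl, hAB⟩ with ha
  set b : Ω := ⟨B, hB, hAB, subset_rfl⟩ with hb
  have hc0 : IsChain (· ≤ ·) ({a, b} : Set Ω) := by
    intro x hx y hy _
    rcases hx with rfl | hx <;> rcases hy with rfl | hy
    · exact Or.inl le_rfl
    · rcases hy with rfl; exact Or.inl hAB
    · rcases hx with rfl; exact Or.inr hAB
    · rcases hx with rfl; rcases hy with rfl; exact Or.inl le_rfl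
  obtain ⟨M, hM, hM0⟩ := hc0.exists_maxChain
  set 𝒞 : Set (NonemptyCompacts X) := Subtype.val '' M with h𝒞
  have hprops : ∀ K ∈ 𝒞, IsConnected (K : Set X) ∧ (A : Set X) ⊆ (K : Set X) ∧
      (K : Set X) ⊆ (B : Set X) := by
    rintro K ⟨z, hz, rfl⟩; exact z.2
  have hchain : IsChain (· ≤ ·) 𝒞 := by
    rintro _ ⟨z, hz, rfl⟩ _ ⟨w, hw, rfl⟩ hne
    exact hM.isChain hz hw (fun h => hne (congrArg Subtype.val h))
  -- insertion principle
  have hins : ∀ C : NonemptyCompacts X, IsConnected (C : Set X) → (A : Set X) ⊆ (C : Set X) →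
      (C : Set X) ⊆ (B : Set X) → (∀ K ∈ 𝒞, K ≤ C ∨ C ≤ K) → C ∈ 𝒞 := by
    intro C hC hAC hCB hcomp
    set z : Ω := ⟨C, hC, hAC, hCB⟩ with hz
    have hins' : IsChain (· ≤ ·) (insert z M) := by
      apply hM.isChain.insert
      intro w hw _
      rcases hcomp w.1 ⟨w, hw, rfl⟩ with h | h
      · exact Or.inr h
      · exact Or.inl h
    have : M = insert z M := hM.2 hins' (subset_insert _ _)
    exact ⟨z, by rw [this]; exact mem_insert _ _, rfl⟩
  refine ⟨𝒞, ⟨a, hM0 (by simp), rfl⟩, ⟨b, hM0 (by simp), rfl⟩, hprops, hchain, ?_, ?_⟩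
  · -- closedness
    have hclosure : closure 𝒞 ⊆ 𝒞 := by
      intro C hCcl
      have hpre : IsPreconnected (C : Set X) := by
        have : closure 𝒞 ⊆ {D : NonemptyCompacts X | IsPreconnected (D : Set X)} :=
          closure_minimal (fun D hD => ((hprops D hD).1).isPreconnected) isClosed_con
        exact this hCcl
      have hAC : (A : Set X) ⊆ (C : Set X) :=
        closure_minimal (fun D hD => (hprops D hD).2.1) (isClosed_supset A) hCcl
      have hCB : (C : Set X) ⊆ (B : Set X) :=
        closure_minimal (fun D hD => (hprops D hD).2.2) (isClosed_subsetK B) hCcl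
      have hcomp : ∀ K ∈ 𝒞, K ≤ C ∨ C ≤ K := by
        intro K hK
        have : closure 𝒞 ⊆ {D : NonemptyCompacts X | D ≤ K ∨ K ≤ D} := by
          apply closure_minimal _ (isClosed_comparable K)
          intro D hD
          by_cases hDK : D = K
          · exact Or.inl (hDK ▸ le_rfl)
          · exact hchain hD hK hDK
        rcases this hCcl with h | h
        · exact Or.inr h
        · exact Or.inl h
      exact hins C ⟨C.nonempty, hpre⟩ hAC hCB hcomp
    exact isClosed_of_closure_subset hclosure
  · -- gap density
    intro K hK L hL hKL
    by_cases hmid : ∃ E ∈ 𝒞, (K : Set X) ⊂ (E : Set X) ∧ (E : Set X) ⊂ (L : Set X)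
    · exact hmid
    · push_neg at hmid
      obtain ⟨Lset, hLconn, hLcomp, h1, h2⟩ :=
        exists_strictly_between (hprops K hK).1 K.isCompact (hprops L hL).1 L.isCompact hKL
      set Cnc : NonemptyCompacts X := ⟨⟨Lset, hLcomp⟩, hLconn.nonempty⟩ with hCnc
      have hcoe : (Cnc : Set X) = Lset := rfl
      have hmem : Cnc ∈ 𝒞 := by
        apply hins Cnc (by rw [hcoe]; exact hLconn)
          (((hprops K hK).2.1).trans (by rw [hcoe]; exact h1.subset))
          (by rw [hcoe]; exact h2.subset.trans (hprops L hL).2.2)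
        intro E hE
        by_cases hEK : E = K
        · subst hEK; exact Or.inl (by rw [le_iff_subset, hcoe]; exact h1.subset)
        by_cases hEL : E = L
        · subst hEL; exact Or.inr (by rw [le_iff_subset, hcoe]; exact h2.subset)
        rcases hchain hE hK hEK with h | h
        · exact Or.inl (h.trans (by rw [le_iff_subset, hcoe]; exact h1.subset))
        · rcases hchain hE hL hEL with h' | h'
          · -- K ≤ E ≤ L, E ≠ K, E ≠ L : E is strictly between, contradiction with hmid
            exact absurd (ssubset_iff'.2 ⟨h', hEL⟩)
              (hmid E hE (ssubset_iff'.2 ⟨h, fun e => hEK e.symm⟩))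
          · exact Or.inr ((by rw [le_iff_subset, hcoe]; exact h2.subset : Cnc ≤ L).trans h')
      exact ⟨Cnc, hmem, by rw [hcoe]; exact h1, by rw [hcoe]; exact h2⟩

lemma chain_aux {𝒟 : Set (NonemptyCompacts X)} {f : NonemptyCompacts X → ℝ}
    (hf : Continuous f)
    (hmono : ∀ K L : NonemptyCompacts X, K ∈ 𝒟 → L ∈ 𝒟 → (K : Set X) ⊂ (L : Set X) → f K < f L)
    (hcl : IsClosed 𝒟) (hchain : IsChain (· ≤ ·) 𝒟)
    (hdense : ∀ K ∈ 𝒟, ∀ L ∈ 𝒟, (K : Set X) ⊂ (L : Set X) →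
      ∃ M ∈ 𝒟, (K : Set X) ⊂ (M : Set X) ∧ (M : Set X) ⊂ (L : Set X))
    {U V : Set (NonemptyCompacts X)} (hU : IsOpen U) (hV : IsOpen V)
    (hcover : 𝒟 ⊆ U ∪ V) (hUV : 𝒟 ∩ (U ∩ V) = ∅)
    {K₀ K₁ : NonemptyCompacts X} (hK₀ : K₀ ∈ 𝒟 ∩ U) (hK₁ : K₁ ∈ 𝒟 ∩ V)
    (hle : K₀ ≤ K₁) : False := by
  classical
  have hssub : ∀ {P Q : NonemptyCompacts X}, P ∈ 𝒟 → Q ∈ 𝒟 → P ≤ Q → P ≠ Q →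
      (P : Set X) ⊂ (Q : Set X) := fun hP hQ h hne => ssubset_iff'.2 ⟨h, hne⟩
  set T : Set (NonemptyCompacts X) := {K | K ∈ 𝒟 ∧ K₀ ≤ K ∧ K ≤ K₁ ∧ K ∈ U} with hT
  have hTne : T.Nonempty := ⟨K₀, hK₀.1, le_rfl, hle, hK₀.2⟩
  have hclT𝒟 : closure T ⊆ 𝒟 := closure_minimal (fun K hK => hK.1) hcl
  obtain ⟨M₀, hM₀cl, hM₀max⟩ :=
    (isClosed_closure.isCompact).exists_isMaxOn hTne.closure hf.continuousOn
  have hM₀𝒟 : M₀ ∈ 𝒟 := hclT𝒟 hM₀cl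
  have hK₀M₀ : K₀ ≤ M₀ :=
    closure_minimal (fun K hK => hK.2.1) (isClosed_supset K₀) hM₀cl
  have hM₀K₁ : M₀ ≤ K₁ :=
    closure_minimal (fun K (hK : K ∈ T) => hK.2.2.1) (isClosed_subsetK K₁) hM₀cl
  have hmaxle : ∀ K ∈ closure T, K ≤ M₀ := by
    intro K hK
    by_cases hKM : K = M₀
    · exact hKM ▸ le_rfl
    rcases hchain (hclT𝒟 hK) hM₀𝒟 hKM with h | h
    · exact h
    · exact absurd (hM₀max hK) (not_le.2 (hmono M₀ K hM₀𝒟 (hclT𝒟 hK) (hssub hM₀𝒟 (hclT𝒟 hK) h (fun e => hKM e.symm))))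
  rcases hcover hM₀𝒟 with hM₀U | hM₀V
  · -- M₀ ∈ U
    have hM₀ne : M₀ ≠ K₁ := by
      rintro rfl
      exact eq_empty_iff_forall_notMem.1 hUV M₀ ⟨hK₁.1, hM₀U, hK₁.2⟩
    have hM₀K₁' : (M₀ : Set X) ⊂ (K₁ : Set X) := hssub hM₀𝒟 hK₁.1 hM₀K₁ hM₀ne
    set W : Set (NonemptyCompacts X) := {K | K ∈ 𝒟 ∧ (M₀ : Set X) ⊂ (K : Set X) ∧ K ≤ K₁} with hW
    have hWne : W.Nonempty := ⟨K₁, hK₁.1, hM₀K₁', le_rfl⟩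
    have hclW𝒟 : closure W ⊆ 𝒟 := closure_minimal (fun K hK => hK.1) hcl
    obtain ⟨N₀, hN₀cl, hN₀min⟩ :=
      (isClosed_closure.isCompact).exists_isMinOn hWne.closure hf.continuousOn
    have hN₀𝒟 : N₀ ∈ 𝒟 := hclW𝒟 hN₀cl
    have hM₀N₀ : M₀ ≤ N₀ :=
      closure_minimal (fun K (hK : K ∈ W) => hK.2.1.subset) (isClosed_supset M₀) hN₀cl
    have hminle : ∀ K ∈ W, N₀ ≤ K := by
      intro K hK
      by_cases hKN : K = N₀
      · exact hKN ▸ le_rfl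
      rcases hchain hN₀𝒟 (hK.1) (fun e => hKN e.symm) with h | h
      · exact h
      · exact absurd (hN₀min (subset_closure hK)) (not_le.2 (hmono K N₀ hK.1 hN₀𝒟 (hssub hK.1 hN₀𝒟 h hKN)))
    by_cases hMN : N₀ = M₀
    · -- M₀ is a limit of W, W ⊆ V
      subst hMN
      have hWV : W ⊆ V := by
        intro K hK
        rcases hcover hK.1 with h | h
        · -- K ∈ U, so K ∈ T, so K ≤ N₀, contradiction
          exfalso
          have hKT : K ∈ T := ⟨hK.1, hK₀M₀.trans hK.2.1.subset, hK.2.2, h⟩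
          have : K ≤ N₀ := hmaxle K (subset_closure hKT)
          exact (hK.2.1.not_subset) this
        · exact h
      obtain ⟨K, hKU, hKW⟩ := mem_closure_iff.1 hN₀cl U hU hM₀U
      exact eq_empty_iff_forall_notMem.1 hUV K ⟨hKW.1, hKU, hWV hKW⟩
    · -- M₀ ⊊ N₀ : use density
      have hlt : (M₀ : Set X) ⊂ (N₀ : Set X) := hssub hM₀𝒟 hN₀𝒟 hM₀N₀ (fun e => hMN e.symm)
      obtain ⟨E, hE𝒟, hE1, hE2⟩ := hdense M₀ hM₀𝒟 N₀ hN₀𝒟 hlt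
      have hN₀K₁ : N₀ ≤ K₁ :=
        closure_minimal (fun K (hK : K ∈ W) => hK.2.2) (isClosed_subsetK K₁) hN₀cl
      have hEW : E ∈ W := ⟨hE𝒟, hE1, hE2.subset.trans hN₀K₁⟩
      exact (hE2.not_subset) (hminle E hEW)
  · -- M₀ ∈ V : contradiction since M₀ ∈ closure T and T ⊆ U
    obtain ⟨K, hKV, hKT⟩ := mem_closure_iff.1 hM₀cl V hV hM₀V
    exact eq_empty_iff_forall_notMem.1 hUV K ⟨hKT.1, hKT.2.2.2, hKV⟩

lemma chain_preconnected {𝒟 : Set (NonemptyCompacts X)} {f : NonemptyCompacts X → ℝ}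
    (hf : Continuous f)
    (hmono : ∀ K L : NonemptyCompacts X, K ∈ 𝒟 → L ∈ 𝒟 → (K : Set X) ⊂ (L : Set X) → f K < f L)
    (hcl : IsClosed 𝒟) (hchain : IsChain (· ≤ ·) 𝒟)
    (hdense : ∀ K ∈ 𝒟, ∀ L ∈ 𝒟, (K : Set X) ⊂ (L : Set X) →
      ∃ M ∈ 𝒟, (K : Set X) ⊂ (M : Set X) ∧ (M : Set X) ⊂ (L : Set X)) :
    IsPreconnected 𝒟 := by
  intro U V hU hV hcover ⟨P, hP𝒟, hPU⟩ ⟨Q, hQ𝒟, hQV⟩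
  by_contra hUV
  have hUV' : 𝒟 ∩ (U ∩ V) = ∅ := not_nonempty_iff_eq_empty.1 hUV
  by_cases hPQ : P = Q
  · subst hPQ
    exact hUV ⟨P, hP𝒟, hPU, hQV⟩
  rcases hchain hP𝒟 hQ𝒟 hPQ with h | h
  · exact chain_aux hf hmono hcl hchain hdense hU hV hcover hUV' ⟨hP𝒟, hPU⟩ ⟨hQ𝒟, hQV⟩ h
  · exact chain_aux hf hmono hcl hchain hdense hV hU
      (by rwa [union_comm]) (by rw [inter_comm V U]; exact hUV') ⟨hQ𝒟, hQV⟩ ⟨hP𝒟, hPU⟩ h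

lemma slice_preconnected {A B : Type*} [TopologicalSpace A] [TopologicalSpace B] [T2Space A]
    {S : Set (A × B)} (hS : IsCompact S) {C : Set A}
    (hproj : Prod.fst '' S = C) (hC : IsPreconnected C)
    (hslice : ∀ a : A, IsPreconnected {b : B | (a, b) ∈ S}) :
    IsPreconnected S := by
  intro U V hU hV hcover ⟨p, hpS, hpU⟩ ⟨q, hqS, hqV⟩
  by_contra hne
  have hUV : S ∩ (U ∩ V) = ∅ := not_nonempty_iff_eq_empty.1 hne
  have hdich : ∀ a : A, {b : B | (a, b) ∈ S} ⊆ {b : B | (a, b) ∈ U} ∨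
      {b : B | (a, b) ∈ S} ⊆ {b : B | (a, b) ∈ V} := by
    intro a
    by_contra hcon
    push_neg at hcon
    obtain ⟨b1, hb1S, hb1U⟩ := not_subset.1 hcon.1
    obtain ⟨b2, hb2S, hb2V⟩ := not_subset.1 hcon.2
    have hb1V : (a, b1) ∈ V := (hcover hb1S).resolve_left hb1U
    have hb2U : (a, b2) ∈ U := (hcover hb2S).resolve_right hb2V
    obtain ⟨b, hbS, hbU, hbV⟩ := hslice a {b : B | (a, b) ∈ U} {b : B | (a, b) ∈ V}
      (hU.preimage (Continuous.prodMk_right a)) (hV.preimage (Continuous.prodMk_right a))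
      (fun b hb => hcover hb) ⟨b2, hb2S, hb2U⟩ ⟨b1, hb1S, hb1V⟩
    exact eq_empty_iff_forall_notMem.1 hUV (a, b) ⟨hbS, hbU, hbV⟩
  set ΦU : Set A := Prod.fst '' (S ∩ Vᶜ) with hΦU
  set ΦV : Set A := Prod.fst '' (S ∩ Uᶜ) with hΦV
  have hΦUc : IsCompact ΦU := ((hS.inter_right hV.isClosed_compl).image continuous_fst)
  have hΦVc : IsCompact ΦV := ((hS.inter_right hU.isClosed_compl).image continuous_fst)
  have hcovC : C ⊆ ΦU ∪ ΦV := by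
    rintro a haC
    rw [← hproj] at haC
    obtain ⟨⟨a', b⟩, hpS', rfl⟩ := haC
    rcases hdich a' with h | h
    · exact Or.inl ⟨(a', b), ⟨hpS', fun hV' =>
        eq_empty_iff_forall_notMem.1 hUV (a', b) ⟨hpS', h hpS', hV'⟩⟩, rfl⟩
    · exact Or.inr ⟨(a', b), ⟨hpS', fun hU' =>
        eq_empty_iff_forall_notMem.1 hUV (a', b) ⟨hpS', hU', h hpS'⟩⟩, rfl⟩
  have hdisj : Disjoint ΦU ΦV := by
    rw [Set.disjoint_left]
    rintro a ⟨⟨a1, b1⟩, ⟨hS1, hV1⟩, rfl⟩ ⟨⟨a2, b2⟩, ⟨hS2, hU2⟩, ha2⟩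
    obtain rfl : a2 = a1 := ha2
    rcases hdich a2 with h | h
    · exact hU2 (h hS2)
    · exact hV1 (h hS1)
  obtain ⟨U', V', hU', hV', hΦU', hΦV', hU'V'⟩ :=
    SeparatedNhds.of_isCompact_isCompact hΦUc hΦVc hdisj
  have hpΦ : p.1 ∈ ΦU :=
    ⟨p, ⟨hpS, fun hV' => eq_empty_iff_forall_notMem.1 hUV p ⟨hpS, hpU, hV'⟩⟩, rfl⟩
  have hqΦ : q.1 ∈ ΦV :=
    ⟨q, ⟨hqS, fun hU' => eq_empty_iff_forall_notMem.1 hUV q ⟨hqS, hU', hqV⟩⟩, rfl⟩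
  obtain ⟨z, hzC, hzU', hzV'⟩ := hC U' V' hU' hV'
    (fun a ha => (hcovC ha).elim (fun h => Or.inl (hΦU' h)) (fun h => Or.inr (hΦV' h)))
    ⟨p.1, by rw [← hproj]; exact ⟨p, hpS, rfl⟩, hΦU' hpΦ⟩
    ⟨q.1, by rw [← hproj]; exact ⟨q, hqS, rfl⟩, hΦV' hqΦ⟩
  exact Set.disjoint_left.1 hU'V' hzU' hzV'

/-- the singleton continuum -/
noncomputable def singNC (x : X) : NonemptyCompacts X :=
  ⟨⟨{x}, isCompact_singleton⟩, Set.singleton_nonempty x⟩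

lemma coe_singNC (x : X) : ((singNC x : NonemptyCompacts X) : Set X) = {x} := rfl

end WhitneyAux

theorem whitney_level_is_continuum
    {X : Type*} [MetricSpace X] [CompactSpace X] [ConnectedSpace X] [Nonempty X]
    (μ : SubC X → ℝ) (hμ : IsWhitneyMap μ) (t : ℝ) (ht0 : 0 ≤ t)
    (ht : t ≤ μ (wholeC X)) :
    (Set.Nonempty {K : SubC X | μ K = t}) ∧ IsCompact {K : SubC X | μ K = t} ∧
      IsConnected {K : SubC X | μ K = t} := by
  classical
  open WhitneyAux in
  obtain ⟨hcont, hzero, hstrict⟩ := hμ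
  -- the set of connected elements is closed
  have hsetEq : {C : NonemptyCompacts X | IsConnected (C : Set X)} =
      {C : NonemptyCompacts X | IsPreconnected (C : Set X)} :=
    Set.ext fun C => ⟨fun h => h.2, fun h => ⟨C.nonempty, h⟩⟩
  have hConCl : IsClosed {C : NonemptyCompacts X | IsConnected (C : Set X)} := by
    rw [hsetEq]; exact isClosed_con
  -- Tietze extension of μ to all of NonemptyCompacts X
  obtain ⟨ν, hνr⟩ := ContinuousMap.exists_restrict_eq (Y := ℝ) hConCl
    ⟨fun z => μ ⟨z.1, z.2⟩, hcont.comp (Continuous.subtype_mk continuous_subtype_val _)⟩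
  have hνs : ∀ K : SubC X, ν K.1 = μ K := by
    intro K
    have := congrFun (congrArg DFunLike.coe hνr) ⟨K.1, K.2⟩
    simpa using this
  have hstrictν : ∀ C D : NonemptyCompacts X, IsConnected (C : Set X) →
      IsConnected (D : Set X) → (C : Set X) ⊂ (D : Set X) → ν C < ν D := by
    intro C D hC hD h
    have := hstrict ⟨C, hC⟩ ⟨D, hD⟩ h
    rwa [← hνs ⟨C, hC⟩, ← hνs ⟨D, hD⟩] at this
  have hmonoν : ∀ C D : NonemptyCompacts X, IsConnected (C : Set X) →
      IsConnected (D : Set X) → (C : Set X) ⊆ (D : Set X) → ν C ≤ ν D := by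
    intro C D hC hD h
    by_cases he : C = D
    · subst he; exact le_rfl
    · exact (hstrictν C D hC hD (ssubset_iff_subset_ne.2
        ⟨h, fun e => he (NonemptyCompacts.ext e)⟩)).le
  -- compactness of the hyperspace of subcontinua
  haveI hCS : CompactSpace (SubC X) := isCompact_iff_compactSpace.1 hConCl.isCompact
  -- through every point of X there is a continuum at level t
  have hwhole : ν (wholeC X).1 = μ (wholeC X) := hνs _
  have level_through : ∀ x : X, ∃ W : NonemptyCompacts X,
      IsConnected (W : Set X) ∧ x ∈ (W : Set X) ∧ ν W = t := by
    intro x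
    obtain ⟨𝒞, hA𝒞, hB𝒞, hprops, hchain, hclosed, hdense⟩ :=
      exists_good_chain (singNC x) (wholeC X).1
        (by rw [coe_singNC]; exact isConnected_singleton)
        (show IsConnected ((((wholeC X).1 : NonemptyCompacts X)) : Set X) from isConnected_univ)
        (Set.subset_univ _)
    have hpre : IsPreconnected _ := chain_preconnected (f := ⇑ν) ν.continuous
      (fun K L hK hL h => hstrictν K L (hprops K hK).1 (hprops L hL).1 h)
      hclosed hchain hdense
    have hsing0 : ν (singNC x) = 0 := by
      have := hzero x ⟨singNC x, isConnected_singleton⟩ rfl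
      rwa [← hνs ⟨singNC x, isConnected_singleton⟩] at this
    have hIcc : t ∈ Set.Icc (ν (singNC x)) (ν (wholeC X).1) := by
      rw [hsing0, hwhole]; exact ⟨ht0, ht⟩
    obtain ⟨W, hW𝒞, hWt⟩ := hpre.intermediate_value hA𝒞 hB𝒞 ν.continuous.continuousOn hIcc
    exact ⟨W, (hprops W hW𝒞).1,
      Set.singleton_subset_iff.1 (hprops W hW𝒞).2.1, hWt⟩
  -- nonemptiness
  obtain ⟨x₀⟩ := ‹Nonempty X›
  obtain ⟨W₀, hW₀c, _, hW₀t⟩ := level_through x₀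
  have hne : Set.Nonempty {K : SubC X | μ K = t} :=
    ⟨⟨W₀, hW₀c⟩, by rw [Set.mem_setOf_eq, ← hνs ⟨W₀, hW₀c⟩]; exact hW₀t⟩
  -- compactness of the level
  have hΛcl : IsClosed {K : SubC X | μ K = t} := isClosed_singleton.preimage hcont
  refine ⟨hne, hΛcl.isCompact, ?_⟩
  -- connectedness
  set Λv : Set (NonemptyCompacts X) :=
    {C : NonemptyCompacts X | IsConnected (C : Set X) ∧ ν C = t} with hΛv
  have hΛveq : Subtype.val '' {K : SubC X | μ K = t} = Λv := by
    ext C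
    constructor
    · rintro ⟨K, hK, rfl⟩
      exact ⟨K.2, by rw [hνs]; exact hK⟩
    · rintro ⟨hC, hCt⟩
      exact ⟨⟨C, hC⟩, by rw [Set.mem_setOf_eq, ← hνs ⟨C, hC⟩]; exact hCt, rfl⟩
  have hΛvCl : IsClosed Λv := by
    have : Λv = {C : NonemptyCompacts X | IsConnected (C : Set X)} ∩ (⇑ν ⁻¹' {t}) := rfl
    rw [this]
    exact hConCl.inter (isClosed_singleton.preimage ν.continuous)
  have hΛvPre : IsPreconnected Λv := by
    intro U V hU hV hcover ⟨P, hPv, hPU⟩ ⟨Q, hQv, hQV⟩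
    by_contra hnon
    have hUV : Λv ∩ (U ∩ V) = ∅ := Set.not_nonempty_iff_eq_empty.1 hnon
    have h𝒜eq : Λv ∩ U = Λv ∩ Vᶜ := by
      ext C
      refine ⟨fun hC => ⟨hC.1, fun hCV =>
        Set.eq_empty_iff_forall_notMem.1 hUV C ⟨hC.1, hC.2, hCV⟩⟩, fun hC => ⟨hC.1, ?_⟩⟩
      exact (hcover hC.1).resolve_right hC.2
    have hℬeq : Λv ∩ V = Λv ∩ Uᶜ := by
      ext C
      refine ⟨fun hC => ⟨hC.1, fun hCU =>
        Set.eq_empty_iff_forall_notMem.1 hUV C ⟨hC.1, hCU, hC.2⟩⟩, fun hC => ⟨hC.1, ?_⟩⟩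
      exact (hcover hC.1).resolve_left hC.2
    have h𝒜cl : IsClosed (Λv ∩ U) := by rw [h𝒜eq]; exact hΛvCl.inter hV.isClosed_compl
    have hℬcl : IsClosed (Λv ∩ V) := by rw [hℬeq]; exact hΛvCl.inter hU.isClosed_compl
    -- the sets of points covered by elements of each side
    set Astar : Set X := Prod.fst ''
      ({p : X × NonemptyCompacts X | p.1 ∈ (p.2 : Set X)} ∩ (Set.univ ×ˢ (Λv ∩ U))) with hAstar
    set Bstar : Set X := Prod.fst ''
      ({p : X × NonemptyCompacts X | p.1 ∈ (p.2 : Set X)} ∩ (Set.univ ×ˢ (Λv ∩ V))) with hBstar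
    have hAmem : ∀ x : X, x ∈ Astar ↔ ∃ W, W ∈ Λv ∩ U ∧ x ∈ (W : Set X) := by
      intro x
      constructor
      · rintro ⟨⟨y, W⟩, ⟨hyW, -, hW⟩, rfl⟩
        exact ⟨W, hW, hyW⟩
      · rintro ⟨W, hW, hxW⟩
        exact ⟨(x, W), ⟨hxW, Set.mem_univ _, hW⟩, rfl⟩
    have hBmem : ∀ x : X, x ∈ Bstar ↔ ∃ W, W ∈ Λv ∩ V ∧ x ∈ (W : Set X) := by
      intro x
      constructor
      · rintro ⟨⟨y, W⟩, ⟨hyW, -, hW⟩, rfl⟩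
        exact ⟨W, hW, hyW⟩
      · rintro ⟨W, hW, hxW⟩
        exact ⟨(x, W), ⟨hxW, Set.mem_univ _, hW⟩, rfl⟩
    have hAcl : IsClosed Astar :=
      ((isClosed_mem.inter (isClosed_univ.prod h𝒜cl)).isCompact.image continuous_fst).isClosed
    have hBcl : IsClosed Bstar :=
      ((isClosed_mem.inter (isClosed_univ.prod hℬcl)).isCompact.image continuous_fst).isClosed
    have hABcover : Astar ∪ Bstar = Set.univ := by
      apply Set.eq_univ_of_forall
      intro x
      obtain ⟨W, hWc, hxW, hWt⟩ := level_through x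
      have hWΛv : W ∈ Λv := ⟨hWc, hWt⟩
      rcases hcover hWΛv with h | h
      · exact Or.inl ((hAmem x).2 ⟨W, ⟨hWΛv, h⟩, hxW⟩)
      · exact Or.inr ((hBmem x).2 ⟨W, ⟨hWΛv, h⟩, hxW⟩)
    have hAne : Astar.Nonempty := by
      obtain ⟨y, hy⟩ := P.nonempty
      exact ⟨y, (hAmem y).2 ⟨P, ⟨hPv, hPU⟩, hy⟩⟩
    have hBne : Bstar.Nonempty := by
      obtain ⟨y, hy⟩ := Q.nonempty
      exact ⟨y, (hBmem y).2 ⟨Q, ⟨hQv, hQV⟩, hy⟩⟩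
    have hint : (Astar ∩ Bstar).Nonempty := by
      by_contra hint
      rw [Set.not_nonempty_iff_eq_empty] at hint
      have hAopen : IsOpen Astar := by
        have heq : Astar = Bstarᶜ := by
          ext y
          constructor
          · intro hy hyB
            exact Set.eq_empty_iff_forall_notMem.1 hint y ⟨hy, hyB⟩
          · intro hy
            have : y ∈ Astar ∪ Bstar := by rw [hABcover]; trivial
            exact this.resolve_right hy
        rw [heq]
        exact hBcl.isOpen_compl
      rcases isClopen_iff.1 ⟨hAcl, hAopen⟩ with h | h
      · exact absurd h (Set.nonempty_iff_ne_empty.1 hAne)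
      · obtain ⟨y, hy⟩ := hBne
        exact Set.eq_empty_iff_forall_notMem.1 hint y ⟨by rw [h]; trivial, hy⟩
    obtain ⟨x, hxA, hxB⟩ := hint
    obtain ⟨P', hP'𝒜, hxP'⟩ := (hAmem x).1 hxA
    obtain ⟨Q', hQ'ℬ, hxQ'⟩ := (hBmem x).1 hxB
    have hP'c : IsConnected (P' : Set X) := hP'𝒜.1.1
    have hQ'c : IsConnected (Q' : Set X) := hQ'ℬ.1.1
    obtain ⟨𝒞₁, hs𝒞₁, hP𝒞₁, hprops₁, hchain₁, hclosed₁, hdense₁⟩ :=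
      exists_good_chain (singNC x) P' (by rw [coe_singNC]; exact isConnected_singleton) hP'c
        (by rw [coe_singNC]; exact Set.singleton_subset_iff.2 hxP')
    obtain ⟨𝒞₂, hs𝒞₂, hQ𝒞₂, hprops₂, hchain₂, hclosed₂, hdense₂⟩ :=
      exists_good_chain (singNC x) Q' (by rw [coe_singNC]; exact isConnected_singleton) hQ'c
        (by rw [coe_singNC]; exact Set.singleton_subset_iff.2 hxQ')
    have hx₁ : ∀ K ∈ 𝒞₁, x ∈ (K : Set X) := by
      intro K hK
      apply (hprops₁ K hK).2.1
      rw [coe_singNC]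
      exact Set.mem_singleton x
    have hx₂ : ∀ L ∈ 𝒞₂, x ∈ (L : Set X) := by
      intro L hL
      apply (hprops₂ L hL).2.1
      rw [coe_singNC]
      exact Set.mem_singleton x
    have hjc : ∀ K L : NonemptyCompacts X, K ∈ 𝒞₁ → L ∈ 𝒞₂ →
        IsConnected ((K ⊔ L : NonemptyCompacts X) : Set X) := by
      intro K L hK hL
      rw [NonemptyCompacts.coe_sup]
      exact IsConnected.union ⟨x, hx₁ K hK, hx₂ L hL⟩ (hprops₁ K hK).1 (hprops₂ L hL).1
    set S : Set (NonemptyCompacts X × NonemptyCompacts X) :=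
      (𝒞₁ ×ˢ 𝒞₂) ∩ {p | ν (p.1 ⊔ p.2) = t} with hSdef
    have hνsupcont : Continuous fun p : NonemptyCompacts X × NonemptyCompacts X =>
        ν (p.1 ⊔ p.2) := ν.continuous.comp WhitneyAux.continuous_sup
    have hScomp : IsCompact S :=
      ((hclosed₁.prod hclosed₂).inter (isClosed_singleton.preimage hνsupcont)).isCompact
    have hνKsup : ∀ K : NonemptyCompacts X,
        Continuous fun L : NonemptyCompacts X => ν (K ⊔ L) :=
      fun K => ν.continuous.comp (WhitneyAux.continuous_sup.comp (continuous_const.prodMk continuous_id))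
    have hν₁le : ∀ K ∈ 𝒞₁, ν K ≤ t := by
      intro K hK
      have := hmonoν K P' (hprops₁ K hK).1 hP'c (hprops₁ K hK).2.2
      rwa [hP'𝒜.1.2] at this
    have hproj : Prod.fst '' S = 𝒞₁ := by
      ext K
      constructor
      · rintro ⟨⟨K', L⟩, ⟨⟨hK', hL⟩, -⟩, rfl⟩
        exact hK'
      · intro hK
        have hpre₂ : IsPreconnected 𝒞₂ := chain_preconnected (f := ⇑ν) ν.continuous
          (fun K' L' hK' hL' h => hstrictν K' L' (hprops₂ K' hK').1 (hprops₂ L' hL').1 h)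
          hclosed₂ hchain₂ hdense₂
        have hlow : ν (K ⊔ singNC x) = ν K := by
          rw [sup_eq_left.2 (show singNC x ≤ K from (hprops₁ K hK).2.1)]
        have hhigh : t ≤ ν (K ⊔ Q') := by
          have := hmonoν Q' (K ⊔ Q') hQ'c (hjc K Q' hK hQ𝒞₂)
            (by rw [NonemptyCompacts.coe_sup]; exact Set.subset_union_right)
          rwa [hQ'ℬ.1.2] at this
        have hIcc : t ∈ Set.Icc (ν (K ⊔ singNC x)) (ν (K ⊔ Q')) :=
          ⟨by rw [hlow]; exact hν₁le K hK, hhigh⟩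
        obtain ⟨L, hL𝒞₂, hLt⟩ := hpre₂.intermediate_value hs𝒞₂ hQ𝒞₂
          (hνKsup K).continuousOn hIcc
        exact ⟨(K, L), ⟨⟨hK, hL𝒞₂⟩, hLt⟩, rfl⟩
    have hslice : ∀ K : NonemptyCompacts X, IsPreconnected {L | (K, L) ∈ S} := by
      intro K
      by_cases hK : K ∈ 𝒞₁
      · have hDeq : {L | (K, L) ∈ S} = 𝒞₂ ∩ {L | ν (K ⊔ L) = t} := by
          ext L
          simp only [hSdef, Set.mem_inter_iff, Set.mem_prod, Set.mem_setOf_eq]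
          tauto
        rw [hDeq]
        apply chain_preconnected (f := ⇑ν) ν.continuous
        · intro K' L' hK' hL' h
          exact hstrictν K' L' (hprops₂ K' hK'.1).1 (hprops₂ L' hL'.1).1 h
        · exact hclosed₂.inter (isClosed_singleton.preimage (hνKsup K))
        · exact fun a ha b hb hab => hchain₂ ha.1 hb.1 hab
        · intro K' hK' L' hL' h
          obtain ⟨M, hM, hM1, hM2⟩ := hdense₂ K' hK'.1 L' hL'.1 h
          refine ⟨M, ⟨hM, ?_⟩, hM1, hM2⟩
          have h1 : ν (K ⊔ K') ≤ ν (K ⊔ M) := hmonoν _ _ (hjc K K' hK hK'.1) (hjc K M hK hM)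
            (by rw [NonemptyCompacts.coe_sup, NonemptyCompacts.coe_sup]
                exact Set.union_subset_union_right _ hM1.subset)
          have h2 : ν (K ⊔ M) ≤ ν (K ⊔ L') := hmonoν _ _ (hjc K M hK hM) (hjc K L' hK hL'.1)
            (by rw [NonemptyCompacts.coe_sup, NonemptyCompacts.coe_sup]
                exact Set.union_subset_union_right _ hM2.subset)
          have ht1 : ν (K ⊔ K') = t := hK'.2
          have ht2 : ν (K ⊔ L') = t := hL'.2
          have : ν (K ⊔ M) ≤ t := ht2 ▸ h2
          have : t ≤ ν (K ⊔ M) := ht1 ▸ h1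
          exact le_antisymm (ht2 ▸ h2) (ht1 ▸ h1)
      · have hempty : {L | (K, L) ∈ S} = ∅ :=
          Set.eq_empty_iff_forall_notMem.2 fun L hL => hK hL.1.1
        rw [hempty]
        exact isPreconnected_empty
    have hpre₁ : IsPreconnected 𝒞₁ := chain_preconnected (f := ⇑ν) ν.continuous
      (fun K' L' hK' hL' h => hstrictν K' L' (hprops₁ K' hK').1 (hprops₁ L' hL').1 h)
      hclosed₁ hchain₁ hdense₁
    have hSpre : IsPreconnected S := slice_preconnected hScomp rfl
      (by rw [hproj]; exact hpre₁) hslice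
    have h𝒢pre : IsPreconnected
        ((fun p : NonemptyCompacts X × NonemptyCompacts X => p.1 ⊔ p.2) '' S) :=
      hSpre.image _ WhitneyAux.continuous_sup.continuousOn
    have h𝒢Λv : ((fun p : NonemptyCompacts X × NonemptyCompacts X => p.1 ⊔ p.2) '' S) ⊆ Λv := by
      rintro _ ⟨⟨K, L⟩, ⟨⟨hK, hL⟩, hνt⟩, rfl⟩
      exact ⟨hjc K L hK hL, hνt⟩
    have hP'mem : P' ∈ (fun p : NonemptyCompacts X × NonemptyCompacts X => p.1 ⊔ p.2) '' S := by
      have hsupP : P' ⊔ singNC x = P' :=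
        sup_eq_left.2 (show singNC x ≤ P' from (hprops₁ P' hP𝒞₁).2.1)
      exact ⟨(P', singNC x), ⟨⟨hP𝒞₁, hs𝒞₂⟩, by
        show ν (P' ⊔ singNC x) = t
        rw [hsupP]; exact hP'𝒜.1.2⟩, hsupP⟩
    have hQ'mem : Q' ∈ (fun p : NonemptyCompacts X × NonemptyCompacts X => p.1 ⊔ p.2) '' S := by
      have hsupQ : singNC x ⊔ Q' = Q' :=
        sup_eq_right.2 (show singNC x ≤ Q' from (hprops₂ Q' hQ𝒞₂).2.1)
      exact ⟨(singNC x, Q'), ⟨⟨hs𝒞₁, hQ𝒞₂⟩, by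
        show ν (singNC x ⊔ Q') = t
        rw [hsupQ]; exact hQ'ℬ.1.2⟩, hsupQ⟩
    obtain ⟨z, hz𝒢, hzU, hzV⟩ := h𝒢pre U V hU hV (fun w hw => hcover (h𝒢Λv hw))
      ⟨P', hP'mem, hP'𝒜.2⟩ ⟨Q', hQ'mem, hQ'ℬ.2⟩
    exact Set.eq_empty_iff_forall_notMem.1 hUV z ⟨h𝒢Λv hz𝒢, hzU, hzV⟩
  have htrans := (Topology.IsEmbedding.subtypeVal
    (p := fun K : NonemptyCompacts X => IsConnected (K : Set X))).toIsInducing.isPreconnected_image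
    (s := {K : SubC X | μ K = t})
  rw [hΛveq] at htrans
  exact ⟨hne, htrans.1 hΛvPre⟩
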